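/- Let A ⊆ ℝ^d be compact convex with vol_d(A) > 0, c = centroid_1(A), and ℓ_A(ξ) = vol_{d−1}(A ∩ {x_1 = ξ})^{1/(d−1)} with m_1(A) = 0. Define ℓ'(ξ) = ξ·ℓ_A(c)/c for ξ ∈ [0,c] and ℓ'(ξ) = ℓ_A(ξ) otherwise. Then ℓ'(ξ) ≤ ℓ_A(ξ) for all ξ ∈ [0,c], and the first centroid coordinate of S(ℓ') is at least that of S(ℓ_A). -/

import Mathlib

open MeasureTheory Pointwise

theorem linearized_profile_below_and_centroid_moves_right
    (d : ℕ) (hd : 2 ≤ d)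
    (A : Set (ℝ × (Fin (d - 1) → ℝ)))
    (hcomp : IsCompact A) (hconv : Convex ℝ A) (hvol : 0 < volume A)
    (hmin : sInf (Prod.fst '' A) = 0)
    (c : ℝ) (hc : c = (∫ p in A, p.1) / (volume A).toReal)
    (ℓA : ℝ → ℝ)
    (hℓA : ∀ ξ, ℓA ξ = (volume {y : Fin (d - 1) → ℝ | (ξ, y) ∈ A}).toReal ^
        ((1 : ℝ) / (d - 1)))
    (ℓ' : ℝ → ℝ)
    (hℓ' : ∀ ξ, ℓ' ξ = if ξ ∈ Set.Icc 0 c then ξ * ℓA c / c else ℓA ξ)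
    (S : (ℝ → ℝ) → Set (ℝ × (Fin (d - 1) → ℝ)))
    (hS : ∀ f, S f = {p : ℝ × (Fin (d - 1) → ℝ) | ∀ j, |p.2 j| ≤ f p.1 / 2}) :
    (∀ ξ ∈ Set.Icc 0 c, ℓ' ξ ≤ ℓA ξ) ∧
    (∫ p in S ℓA, p.1) / (volume (S ℓA)).toReal ≤
      (∫ p in S ℓ', p.1) / (volume (S ℓ')).toReal := by
  have hd1 : 1 ≤ d := le_trans (by norm_num) hd
  have hdn : ((d : ℝ) - 1) = ((d - 1 : ℕ) : ℝ) := by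
    push_cast [Nat.cast_sub hd1]; ring
  have hn1 : 1 ≤ d - 1 := by omega
  have hnR : (0 : ℝ) < ((d - 1 : ℕ) : ℝ) := by exact_mod_cast hn1
  set e : ℝ := (1 : ℝ) / ((d : ℝ) - 1) with he_def
  have he_pos : 0 < e := by rw [he_def, hdn]; positivity
  have hen : e * ((d - 1 : ℕ) : ℝ) = 1 := by
    rw [he_def, hdn]; exact one_div_mul_cancel (ne_of_gt hnR)
  -- basic facts about A
  have hAclosed : IsClosed A := hcomp.isClosed
  have hAmeas : MeasurableSet A := hAclosed.measurableSet
  have hA_ne : A.Nonempty := by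
    by_contra h
    rw [Set.not_nonempty_iff_eq_empty] at h
    rw [h] at hvol; simp at hvol
  have hAvol_ne_top : volume A ≠ ⊤ := hcomp.measure_lt_top.ne
  have hcomp_img : IsCompact (Prod.fst '' A) := hcomp.image continuous_fst
  have hfsA : ∀ p ∈ A, (0 : ℝ) ≤ p.1 := by
    intro p hp
    rw [← hmin]
    exact csInf_le hcomp_img.bddBelow ⟨p, hp, rfl⟩
  set M : ℝ := sSup (Prod.fst '' A) with hM_def
  have hMA : ∀ p ∈ A, p.1 ≤ M := by
    intro p hp
    exact le_csSup hcomp_img.bddAbove ⟨p, hp, rfl⟩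
  have hM0 : 0 ≤ M := by
    obtain ⟨p, hp⟩ := hA_ne
    exact le_trans (hfsA p hp) (hMA p hp)
  -- slices
  have hslice_meas : ∀ ξ : ℝ, MeasurableSet (Prod.mk ξ ⁻¹' A) := fun ξ =>
    measurable_prodMk_left hAmeas
  have hslice_compact : ∀ ξ : ℝ, IsCompact (Prod.mk ξ ⁻¹' A) := by
    intro ξ
    refine IsCompact.of_isClosed_subset (hcomp.image continuous_snd)
      (hAclosed.preimage (Continuous.prodMk_right ξ)) ?_
    rintro y hy
    exact ⟨(ξ, y), hy, rfl⟩
  have hslice_fin : ∀ ξ : ℝ, volume (Prod.mk ξ ⁻¹' A) ≠ ⊤ := fun ξ =>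
    (hslice_compact ξ).measure_lt_top.ne
  have hslice_neg : ∀ ξ : ℝ, ξ < 0 → (Prod.mk ξ ⁻¹' A) = ∅ := by
    intro ξ hξ
    ext y
    simp only [Set.mem_preimage, Set.mem_empty_iff_false, iff_false]
    intro hy
    exact absurd (hfsA _ hy) (by simpa using hξ)
  have hslice_gtM : ∀ ξ : ℝ, volume (Prod.mk ξ ⁻¹' A) ≠ 0 → 0 ≤ ξ ∧ ξ ≤ M := by
    intro ξ hξ
    have : (Prod.mk ξ ⁻¹' A).Nonempty := by
      by_contra h
      rw [Set.not_nonempty_iff_eq_empty] at h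
      rw [h] at hξ; simp at hξ
    obtain ⟨y, hy⟩ := this
    exact ⟨hfsA _ hy, hMA _ hy⟩
  -- ℓA rewritten
  have hℓA' : ∀ ξ, ℓA ξ = (volume (Prod.mk ξ ⁻¹' A)).toReal ^ e := fun ξ => hℓA ξ
  have hℓA_nonneg : ∀ ξ, 0 ≤ ℓA ξ := fun ξ => by
    rw [hℓA' ξ]; exact Real.rpow_nonneg ENNReal.toReal_nonneg _
  have hℓA_neg : ∀ ξ : ℝ, ξ < 0 → ℓA ξ = 0 := by
    intro ξ hξ
    rw [hℓA' ξ, hslice_neg ξ hξ]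
    simp only [measure_empty, ENNReal.toReal_zero]
    exact Real.zero_rpow (ne_of_gt he_pos)
  -- nonnegativity of c
  have hb_nonneg : 0 ≤ ∫ p in A, p.1 := setIntegral_nonneg hAmeas hfsA
  have hc0 : 0 ≤ c := by
    rw [hc]; exact div_nonneg hb_nonneg ENNReal.toReal_nonneg
  -- Part 1 : the linear profile lies below ℓA on [0, c]
  have part1 : ∀ ξ ∈ Set.Icc 0 c, ℓ' ξ ≤ ℓA ξ := by
    intro ξ hξ
    rw [hℓ' ξ, if_pos hξ]
    obtain ⟨hξ0, hξc⟩ := hξ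
    rcases eq_or_lt_of_le hξ0 with h0 | h0
    · rw [← h0]; simpa using hℓA_nonneg 0
    have hc_pos : 0 < c := lt_of_lt_of_le h0 hξc
    set t : ℝ := ξ / c with ht_def
    have ht0 : 0 < t := div_pos h0 hc_pos
    have ht1 : t ≤ 1 := (div_le_one hc_pos).2 hξc
    have htc : t * c = ξ := by rw [ht_def]; field_simp
    -- a point of A with first coordinate 0
    have hmem0 : (0 : ℝ) ∈ Prod.fst '' A := by
      rw [← hmin]; exact hcomp_img.sInf_mem (hA_ne.image _)
    obtain ⟨p₀, hp₀A, hp₀1⟩ := hmem0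
    obtain ⟨q1, q2⟩ := p₀
    simp only at hp₀1
    subst hp₀1
    -- the geometric inclusion
    have hsub : (fun y => (1 - t) • q2 + t • y) '' (Prod.mk c ⁻¹' A) ⊆
        Prod.mk ξ ⁻¹' A := by
      rintro _ ⟨y, hy, rfl⟩
      have h2 := hconv hy hp₀A (a := t) (b := 1 - t) ht0.le (by linarith) (by ring)
      have h3 : t • ((c, y) : ℝ × (Fin (d - 1) → ℝ)) + (1 - t) • ((0 : ℝ), q2) =
          (ξ, (1 - t) • q2 + t • y) := by
        simp only [Prod.smul_mk, Prod.mk_add_mk, smul_eq_mul, mul_zero, add_zero,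
          Prod.mk.injEq]
        exact ⟨htc, add_comm _ _⟩
      rw [h3] at h2
      exact h2
    have himage : (fun y => (1 - t) • q2 + t • y) '' (Prod.mk c ⁻¹' A) =
        (1 - t) • q2 +ᵥ t • (Prod.mk c ⁻¹' A) := by
      rw [← Set.image_smul, ← Set.image_vadd, Set.image_image]
      rfl
    have key : ENNReal.ofReal (t ^ (d - 1)) * volume (Prod.mk c ⁻¹' A) ≤
        volume (Prod.mk ξ ⁻¹' A) := by
      have h1 : volume (t • (Prod.mk c ⁻¹' A)) =
          ENNReal.ofReal (t ^ (d - 1)) * volume (Prod.mk c ⁻¹' A) := by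
        rw [Measure.addHaar_smul]
        congr 2
        rw [abs_of_nonneg (by positivity), Module.finrank_fin_fun]
      calc ENNReal.ofReal (t ^ (d - 1)) * volume (Prod.mk c ⁻¹' A)
          = volume (t • (Prod.mk c ⁻¹' A)) := h1.symm
        _ = volume ((1 - t) • q2 +ᵥ t • (Prod.mk c ⁻¹' A)) :=
            (measure_vadd _ _ _).symm
        _ = volume ((fun y => (1 - t) • q2 + t • y) '' (Prod.mk c ⁻¹' A)) := by
            rw [himage]
        _ ≤ volume (Prod.mk ξ ⁻¹' A) := measure_mono hsub
    -- convert to the real statement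
    have hkey2 : t ^ (d - 1) * (volume (Prod.mk c ⁻¹' A)).toReal ≤
        (volume (Prod.mk ξ ⁻¹' A)).toReal := by
      have := ENNReal.toReal_mono (hslice_fin ξ) key
      rwa [ENNReal.toReal_mul, ENNReal.toReal_ofReal (by positivity)] at this
    have hstep : (t ^ (d - 1) * (volume (Prod.mk c ⁻¹' A)).toReal) ^ e ≤
        (volume (Prod.mk ξ ⁻¹' A)).toReal ^ e :=
      Real.rpow_le_rpow (by positivity) hkey2 he_pos.le
    have hsimp : (t ^ (d - 1) * (volume (Prod.mk c ⁻¹' A)).toReal) ^ e =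
        t * ℓA c := by
      rw [Real.mul_rpow (by positivity) ENNReal.toReal_nonneg, hℓA' c]
      congr 1
      rw [← Real.rpow_natCast t (d - 1), ← Real.rpow_mul ht0.le,
        show ((d - 1 : ℕ) : ℝ) * e = 1 from by rw [mul_comm]; exact hen,
        Real.rpow_one]
    rw [hsimp] at hstep
    rw [← hℓA' ξ] at hstep
    calc ξ * ℓA c / c = t * ℓA c := by rw [ht_def]; ring
      _ ≤ ℓA ξ := hstep
  refine ⟨part1, ?_⟩
  -- facts about ℓ'
  have hℓ'_le : ∀ ξ, ℓ' ξ ≤ ℓA ξ := by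
    intro ξ
    by_cases h : ξ ∈ Set.Icc 0 c
    · exact part1 ξ h
    · rw [hℓ' ξ, if_neg h]
  have hℓ'_nonneg : ∀ ξ, 0 ≤ ℓ' ξ := by
    intro ξ
    rw [hℓ' ξ]
    split_ifs with h
    · obtain ⟨h1, h2⟩ := h
      exact div_nonneg (mul_nonneg h1 (hℓA_nonneg c)) hc0
    · exact hℓA_nonneg ξ
  have hℓ'_neg : ∀ ξ : ℝ, ξ < 0 → ℓ' ξ = 0 := by
    intro ξ hξ
    rw [hℓ' ξ, if_neg (by simp [Set.mem_Icc]; intro h; linarith), hℓA_neg ξ hξ]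
  have hℓ'_gt : ∀ ξ : ℝ, c < ξ → ℓ' ξ = ℓA ξ := by
    intro ξ hξ
    rw [hℓ' ξ, if_neg (by simp [Set.mem_Icc]; intro h; linarith)]
  -- measurability
  have hgmeas : Measurable (volume ∘ fun ξ : ℝ => Prod.mk ξ ⁻¹' A) :=
    measurable_measure_prodMk_left hAmeas
  have hℓAmeas : Measurable ℓA := by
    have : ℓA = fun ξ => (volume (Prod.mk ξ ⁻¹' A)).toReal ^ e := funext hℓA'
    rw [this]
    exact (Real.continuous_rpow_const he_pos.le).measurable.comp
      hgmeas.ennreal_toReal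
  have hℓ'meas : Measurable ℓ' := by
    have : ℓ' = fun ξ => if ξ ∈ Set.Icc 0 c then ξ * ℓA c / c else ℓA ξ :=
      funext hℓ'
    rw [this]
    exact Measurable.ite measurableSet_Icc
      ((measurable_id.mul_const _).div_const _) hℓAmeas
  -- profile functions in ℝ≥0∞
  set g : ℝ → ENNReal := fun ξ => ENNReal.ofReal (ℓA ξ) ^ (d - 1) with hg_def
  set g' : ℝ → ENNReal := fun ξ => ENNReal.ofReal (ℓ' ξ) ^ (d - 1) with hg'_def
  have hg_meas : Measurable g := hℓAmeas.ennreal_ofReal.pow_const (d - 1)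
  have hg'_meas : Measurable g' := hℓ'meas.ennreal_ofReal.pow_const (d - 1)
  have hg_eq : ∀ ξ, g ξ = volume (Prod.mk ξ ⁻¹' A) := by
    intro ξ
    rw [hg_def]
    simp only
    rw [hℓA' ξ]
    rw [← ENNReal.ofReal_pow (Real.rpow_nonneg ENNReal.toReal_nonneg _)]
    rw [← Real.rpow_natCast _ (d - 1), ← Real.rpow_mul ENNReal.toReal_nonneg, hen,
      Real.rpow_one, ENNReal.ofReal_toReal (hslice_fin ξ)]
  have hg_neg : ∀ ξ : ℝ, ξ < 0 → g ξ = 0 := by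
    intro ξ hξ
    rw [hg_eq ξ, hslice_neg ξ hξ]; simp
  have hg'_neg : ∀ ξ : ℝ, ξ < 0 → g' ξ = 0 := by
    intro ξ hξ
    rw [hg'_def]
    simp only
    rw [hℓ'_neg ξ hξ]
    simp [zero_pow (by omega : (d - 1) ≠ 0)]
  have hg'_le : ∀ ξ, g' ξ ≤ g ξ := by
    intro ξ
    exact pow_le_pow_left' (ENNReal.ofReal_le_ofReal (hℓ'_le ξ)) (d - 1)
  have hg'_gt : ∀ ξ : ℝ, c < ξ → g' ξ = g ξ := by
    intro ξ hξ
    rw [hg'_def, hg_def]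
    simp only
    rw [hℓ'_gt ξ hξ]
  have hg_supp : ∀ ξ : ℝ, g ξ ≠ 0 → 0 ≤ ξ ∧ ξ ≤ M := by
    intro ξ hξ
    rw [hg_eq ξ] at hξ
    exact hslice_gtM ξ hξ
  have hg'_supp : ∀ ξ : ℝ, g' ξ ≠ 0 → 0 ≤ ξ ∧ ξ ≤ M := by
    intro ξ hξ
    exact hg_supp ξ (fun h => hξ (le_antisymm (h ▸ hg'_le ξ) zero_le))
  -- Fubini for measurable sets in the product
  have hvolB : ∀ B : Set (ℝ × (Fin (d - 1) → ℝ)), MeasurableSet B →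
      volume B = ∫⁻ ξ : ℝ, volume (Prod.mk ξ ⁻¹' B) := by
    intro B hB
    rw [Measure.volume_eq_prod, Measure.prod_apply hB]
  have hintB : ∀ B : Set (ℝ × (Fin (d - 1) → ℝ)), MeasurableSet B →
      ∫⁻ p in B, ENNReal.ofReal p.1 =
        ∫⁻ ξ : ℝ, ENNReal.ofReal ξ * volume (Prod.mk ξ ⁻¹' B) := by
    intro B hB
    rw [Measure.volume_eq_prod, ← lintegral_indicator hB,
      lintegral_prod _ ((measurable_fst.ennreal_ofReal.indicator hB).aemeasurable)]
    refine lintegral_congr fun ξ => ?_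
    have h2 : ∀ y, B.indicator (fun p : ℝ × (Fin (d - 1) → ℝ) => ENNReal.ofReal p.1) (ξ, y) =
        (Prod.mk ξ ⁻¹' B).indicator (fun _ => ENNReal.ofReal ξ) y := by
      intro y
      by_cases hmem : (ξ, y) ∈ B
      · rw [Set.indicator_of_mem hmem, Set.indicator_of_mem (Set.mem_preimage.2 hmem)]
      · rw [Set.indicator_of_notMem hmem,
          Set.indicator_of_notMem (fun h => hmem (Set.mem_preimage.1 h))]
    simp_rw [h2]
    rw [lintegral_indicator (measurable_prodMk_left hB), setLIntegral_const]
  -- the slices of S f are cubes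
  have hcube : ∀ (f : ℝ → ℝ) (ξ : ℝ), Prod.mk ξ ⁻¹' (S f) =
      Set.pi Set.univ (fun _ : Fin (d - 1) => Set.Icc (-(f ξ / 2)) (f ξ / 2)) := by
    intro f ξ
    rw [hS]
    ext y
    simp only [Set.mem_preimage, Set.mem_setOf_eq, Set.mem_pi, Set.mem_univ,
      true_implies, Set.mem_Icc, abs_le]
  have hcubevol : ∀ (f : ℝ → ℝ), (∀ ξ, 0 ≤ f ξ) → ∀ ξ : ℝ,
      volume (Prod.mk ξ ⁻¹' (S f)) = ENNReal.ofReal (f ξ) ^ (d - 1) := by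
    intro f hf ξ
    rw [hcube f ξ, volume_pi_pi]
    have h1 : f ξ / 2 - -(f ξ / 2) = f ξ := by ring
    simp only [Real.volume_Icc, h1]
    rw [Finset.prod_const, Finset.card_univ, Fintype.card_fin]
  have hSmeas : ∀ f : ℝ → ℝ, Measurable f → MeasurableSet (S f) := by
    intro f hf
    rw [hS]
    have h1 : {p : ℝ × (Fin (d - 1) → ℝ) | ∀ j, |p.2 j| ≤ f p.1 / 2} =
        ⋂ j : Fin (d - 1), {p : ℝ × (Fin (d - 1) → ℝ) | |p.2 j| ≤ f p.1 / 2} := by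
      ext p; simp
    rw [h1]
    exact MeasurableSet.iInter fun j => measurableSet_le
      (measurable_snd.eval.abs)
      ((hf.comp measurable_fst).div_const 2)
  -- integrals of g and g'
  have hI3g : (∫⁻ ξ : ℝ, g ξ) = volume A := by
    rw [hvolB A hAmeas]
    exact lintegral_congr fun ξ => hg_eq ξ
  have hbound : ∀ h : ℝ → ENNReal, (∀ ξ : ℝ, h ξ ≠ 0 → 0 ≤ ξ ∧ ξ ≤ M) →
      (∀ ξ, h ξ ≤ g ξ) →
      (∫⁻ ξ : ℝ, ENNReal.ofReal ξ * h ξ) ≤ ENNReal.ofReal M * volume A := by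
    intro h hsupp hle
    rw [← hI3g, ← lintegral_const_mul _ hg_meas]
    refine lintegral_mono fun ξ => ?_
    by_cases h0 : h ξ = 0
    · simp [h0]
    · exact mul_le_mul' (ENNReal.ofReal_le_ofReal (hsupp ξ h0).2) (hle ξ)
  have hfinMA : ENNReal.ofReal M * volume A ≠ ⊤ :=
    ENNReal.mul_ne_top ENNReal.ofReal_ne_top hAvol_ne_top
  have hfincA : ENNReal.ofReal c * volume A ≠ ⊤ :=
    ENNReal.mul_ne_top ENNReal.ofReal_ne_top hAvol_ne_top
  have hI1_ne : (∫⁻ ξ : ℝ, ENNReal.ofReal ξ * g ξ) ≠ ⊤ :=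
    ne_top_of_le_ne_top hfinMA (hbound g hg_supp fun _ => le_rfl)
  have hI1'_ne : (∫⁻ ξ : ℝ, ENNReal.ofReal ξ * g' ξ) ≠ ⊤ :=
    ne_top_of_le_ne_top hfinMA (hbound g' hg'_supp hg'_le)
  have hI2_le : (∫⁻ ξ : ℝ, ENNReal.ofReal (c - ξ) * g ξ) ≤
      ENNReal.ofReal c * volume A := by
    rw [← hI3g, ← lintegral_const_mul _ hg_meas]
    refine lintegral_mono fun ξ => ?_
    by_cases h0 : g ξ = 0
    · simp [h0]
    · exact mul_le_mul' (ENNReal.ofReal_le_ofReal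
        (by linarith [(hg_supp ξ h0).1])) le_rfl
  have hI2_ne : (∫⁻ ξ : ℝ, ENNReal.ofReal (c - ξ) * g ξ) ≠ ⊤ :=
    ne_top_of_le_ne_top hfincA hI2_le
  have hI2'_le : (∫⁻ ξ : ℝ, ENNReal.ofReal (c - ξ) * g' ξ) ≤
      ∫⁻ ξ : ℝ, ENNReal.ofReal (c - ξ) * g ξ :=
    lintegral_mono fun ξ => mul_le_mul' le_rfl (hg'_le ξ)
  have hI2'_ne : (∫⁻ ξ : ℝ, ENNReal.ofReal (c - ξ) * g' ξ) ≠ ⊤ :=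
    ne_top_of_le_ne_top hI2_ne hI2'_le
  have hI4'_eq : (∫⁻ ξ : ℝ, ENNReal.ofReal (ξ - c) * g' ξ) =
      ∫⁻ ξ : ℝ, ENNReal.ofReal (ξ - c) * g ξ := by
    refine lintegral_congr fun ξ => ?_
    rcases le_or_gt ξ c with h | h
    · rw [ENNReal.ofReal_eq_zero.2 (by linarith), zero_mul, zero_mul]
    · rw [hg'_gt ξ h]
  have hmain : ∀ h : ℝ → ENNReal, Measurable h → (∀ ξ : ℝ, ξ < 0 → h ξ = 0) →
      (∫⁻ ξ : ℝ, ENNReal.ofReal ξ * h ξ) +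
        (∫⁻ ξ : ℝ, ENNReal.ofReal (c - ξ) * h ξ) =
      ENNReal.ofReal c * (∫⁻ ξ : ℝ, h ξ) +
        (∫⁻ ξ : ℝ, ENNReal.ofReal (ξ - c) * h ξ) := by
    intro h hm h0
    rw [← lintegral_const_mul _ hm,
      ← lintegral_add_left
        (show Measurable fun ξ : ℝ => ENNReal.ofReal ξ * h ξ from
          measurable_id.ennreal_ofReal.mul hm)
        (fun ξ : ℝ => ENNReal.ofReal (c - ξ) * h ξ),
      ← lintegral_add_left
        (show Measurable fun ξ : ℝ => ENNReal.ofReal c * h ξ from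
          measurable_const.mul hm)
        (fun ξ : ℝ => ENNReal.ofReal (ξ - c) * h ξ)]
    refine lintegral_congr fun ξ => ?_
    rcases lt_or_ge ξ 0 with hneg | hpos
    · rw [h0 ξ hneg]; simp
    rcases le_total ξ c with hle | hge
    · rw [ENNReal.ofReal_eq_zero.2 (by linarith : ξ - c ≤ 0), zero_mul, add_zero,
        ← add_mul, ← ENNReal.ofReal_add hpos (by linarith : (0:ℝ) ≤ c - ξ),
        show ξ + (c - ξ) = c by ring]
    · rw [ENNReal.ofReal_eq_zero.2 (by linarith : c - ξ ≤ 0), zero_mul, add_zero,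
        ← add_mul, ← ENNReal.ofReal_add hc0 (by linarith : (0:ℝ) ≤ ξ - c),
        show c + (ξ - c) = ξ by ring]
  -- the centroid identity
  have hintA : ∫ p in A, p.1 = (∫⁻ ξ : ℝ, ENNReal.ofReal ξ * g ξ).toReal := by
    rw [integral_eq_lintegral_of_nonneg_ae
      ((ae_restrict_iff' hAmeas).2 (ae_of_all _ hfsA))
      measurable_fst.aestronglyMeasurable]
    congr 1
    rw [hintB A hAmeas]
    exact lintegral_congr fun ξ => by rw [hg_eq ξ]
  have ha_pos : 0 < (volume A).toReal := ENNReal.toReal_pos hvol.ne' hAvol_ne_top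
  have hcen : (∫⁻ ξ : ℝ, ENNReal.ofReal ξ * g ξ) =
      ENNReal.ofReal c * ∫⁻ ξ : ℝ, g ξ := by
    have hb : c * (volume A).toReal = ∫ p in A, p.1 := by
      rw [hc]; field_simp
    calc (∫⁻ ξ : ℝ, ENNReal.ofReal ξ * g ξ)
        = ENNReal.ofReal ((∫⁻ ξ : ℝ, ENNReal.ofReal ξ * g ξ).toReal) :=
          (ENNReal.ofReal_toReal hI1_ne).symm
      _ = ENNReal.ofReal (∫ p in A, p.1) := by rw [hintA]
      _ = ENNReal.ofReal (c * (volume A).toReal) := by rw [hb]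
      _ = ENNReal.ofReal c * ENNReal.ofReal ((volume A).toReal) :=
          ENNReal.ofReal_mul hc0
      _ = ENNReal.ofReal c * volume A := by
          rw [ENNReal.ofReal_toReal hAvol_ne_top]
      _ = _ := by rw [hI3g]
  have hI3top : ENNReal.ofReal c * (∫⁻ ξ : ℝ, g ξ) ≠ ⊤ := by
    rw [hI3g]; exact hfincA
  have hI2I4 : (∫⁻ ξ : ℝ, ENNReal.ofReal (c - ξ) * g ξ) =
      ∫⁻ ξ : ℝ, ENNReal.ofReal (ξ - c) * g ξ := by
    have h := hmain g hg_meas hg_neg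
    rw [hcen] at h
    exact (ENNReal.add_right_inj hI3top).1 h
  -- the key inequality for g'
  have hkey' : ENNReal.ofReal c * (∫⁻ ξ : ℝ, g' ξ) ≤
      ∫⁻ ξ : ℝ, ENNReal.ofReal ξ * g' ξ := by
    have h := hmain g' hg'_meas hg'_neg
    have h2 : ENNReal.ofReal c * (∫⁻ ξ : ℝ, g' ξ) +
        (∫⁻ ξ : ℝ, ENNReal.ofReal (c - ξ) * g' ξ) ≤
        (∫⁻ ξ : ℝ, ENNReal.ofReal ξ * g' ξ) +
        (∫⁻ ξ : ℝ, ENNReal.ofReal (c - ξ) * g' ξ) := by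
      calc ENNReal.ofReal c * (∫⁻ ξ : ℝ, g' ξ) +
            (∫⁻ ξ : ℝ, ENNReal.ofReal (c - ξ) * g' ξ)
          ≤ ENNReal.ofReal c * (∫⁻ ξ : ℝ, g' ξ) +
            (∫⁻ ξ : ℝ, ENNReal.ofReal (c - ξ) * g ξ) :=
            add_le_add le_rfl hI2'_le
        _ = ENNReal.ofReal c * (∫⁻ ξ : ℝ, g' ξ) +
            (∫⁻ ξ : ℝ, ENNReal.ofReal (ξ - c) * g ξ) := by rw [hI2I4]
        _ = ENNReal.ofReal c * (∫⁻ ξ : ℝ, g' ξ) +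
            (∫⁻ ξ : ℝ, ENNReal.ofReal (ξ - c) * g' ξ) := by rw [hI4'_eq]
        _ = _ := h.symm
    exact (ENNReal.add_le_add_iff_right hI2'_ne).1 h2
  -- positivity of the volume of S ℓ'
  have hI3'_ne0 : (∫⁻ ξ : ℝ, g' ξ) ≠ 0 := by
    intro h0
    have hz : g' =ᶠ[ae volume] 0 := (lintegral_eq_zero_iff hg'_meas).1 h0
    have hI4'0 : (∫⁻ ξ : ℝ, ENNReal.ofReal (ξ - c) * g ξ) = 0 := by
      rw [← hI4'_eq]
      refine (lintegral_eq_zero_iff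
        (show Measurable fun ξ : ℝ => ENNReal.ofReal (ξ - c) * g' ξ from
          ((measurable_id.sub measurable_const).ennreal_ofReal).mul hg'_meas)).2 ?_
      filter_upwards [hz] with ξ hξ
      simp only [Pi.zero_apply] at hξ ⊢
      rw [hξ, mul_zero]
    have hI20 : (∫⁻ ξ : ℝ, ENNReal.ofReal (c - ξ) * g ξ) = 0 := by
      rw [hI2I4, hI4'0]
    have hz2 : ∀ᵐ ξ : ℝ, ENNReal.ofReal (c - ξ) * g ξ = 0 := by
      have h := (lintegral_eq_zero_iff
        (((measurable_const.sub measurable_id).ennreal_ofReal).mul hg_meas)).1 hI20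
      filter_upwards [h] with ξ hξ
      simpa using hξ
    have hzc : ∀ᵐ ξ : ℝ, ξ ≠ c := by
      rw [ae_iff]
      have h1 : {ξ : ℝ | ¬ ξ ≠ c} = {c} := by ext x; simp
      rw [h1]
      exact measure_singleton c
    have hgz : ∀ᵐ ξ : ℝ, g ξ = 0 := by
      filter_upwards [hz, hz2, hzc] with ξ h1 h2 h3
      simp only [Pi.zero_apply] at h1
      rcases lt_trichotomy ξ c with h | h | h
      · rcases mul_eq_zero.1 h2 with h' | h'
        · exact absurd h' (by simp only [ENNReal.ofReal_eq_zero, not_le]; linarith)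
        · exact h'
      · exact absurd h h3
      · rw [← hg'_gt ξ h]; exact h1
    have hg0 : (∫⁻ ξ : ℝ, g ξ) = 0 :=
      (lintegral_eq_zero_iff hg_meas).2 (by filter_upwards [hgz] with ξ h; exact h)
    rw [hI3g] at hg0
    exact hvol.ne' hg0
  have hI3'_ne_top : (∫⁻ ξ : ℝ, g' ξ) ≠ ⊤ :=
    ne_top_of_le_ne_top (hI3g ▸ hAvol_ne_top) (lintegral_mono hg'_le)
  -- volumes of the symmetrized bodies
  have hSAmeas : MeasurableSet (S ℓA) := hSmeas ℓA hℓAmeas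
  have hS'meas : MeasurableSet (S ℓ') := hSmeas ℓ' hℓ'meas
  have hvolSA : volume (S ℓA) = ∫⁻ ξ : ℝ, g ξ := by
    rw [hvolB _ hSAmeas]
    exact lintegral_congr fun ξ => hcubevol ℓA hℓA_nonneg ξ
  have hvolS' : volume (S ℓ') = ∫⁻ ξ : ℝ, g' ξ := by
    rw [hvolB _ hS'meas]
    exact lintegral_congr fun ξ => hcubevol ℓ' hℓ'_nonneg ξ
  -- a null set
  have hnull : volume {p : ℝ × (Fin (d - 1) → ℝ) | p.2 = 0} = 0 := by
    have h1 : {p : ℝ × (Fin (d - 1) → ℝ) | p.2 = 0} =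
        (Set.univ : Set ℝ) ×ˢ ({0} : Set (Fin (d - 1) → ℝ)) := by
      ext p
      simp only [Set.mem_setOf_eq, Set.mem_prod, Set.mem_univ, true_and,
        Set.mem_singleton_iff]
    rw [h1, Measure.volume_eq_prod, Measure.prod_prod]
    have h2 : ({0} : Set (Fin (d - 1) → ℝ)) =
        Set.pi Set.univ (fun _ : Fin (d - 1) => ({0} : Set ℝ)) := by
      ext y
      simp [funext_iff, Set.mem_pi]
    rw [h2, volume_pi_pi]
    simp only [Real.volume_singleton, Finset.prod_const, Finset.card_univ,
      Fintype.card_fin]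
    rw [zero_pow (by omega : (d - 1) ≠ 0), mul_zero]
  -- the first-coordinate integral over S f
  have hintS : ∀ f : ℝ → ℝ, Measurable f → (∀ ξ, 0 ≤ f ξ) →
      (∀ ξ : ℝ, ξ < 0 → f ξ = 0) →
      ∫ p in S f, p.1 =
        (∫⁻ ξ : ℝ, ENNReal.ofReal ξ * ENNReal.ofReal (f ξ) ^ (d - 1)).toReal := by
    intro f hf hf0 hfneg
    have hSm := hSmeas f hf
    have hae : ∀ᵐ p ∂(volume.restrict (S f)), 0 ≤ p.1 := by
      rw [ae_restrict_iff' hSm, ae_iff]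
      refine measure_mono_null ?_ hnull
      intro p hp
      simp only [Set.mem_setOf_eq] at hp ⊢
      push_neg at hp
      obtain ⟨hpS, hp1⟩ := hp
      rw [hS] at hpS
      have hfz : f p.1 = 0 := hfneg _ hp1
      funext j
      have hj := hpS j
      rw [hfz] at hj
      have : |p.2 j| ≤ 0 := by linarith
      simpa using abs_eq_zero.1 (le_antisymm this (abs_nonneg _))
    rw [integral_eq_lintegral_of_nonneg_ae hae measurable_fst.aestronglyMeasurable]
    congr 1
    rw [hintB _ hSm]
    exact lintegral_congr fun ξ => by rw [hcubevol f hf0 ξ]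
  -- conclude
  have hIA : ∫ p in S ℓA, p.1 = (∫⁻ ξ : ℝ, ENNReal.ofReal ξ * g ξ).toReal :=
    hintS ℓA hℓAmeas hℓA_nonneg hℓA_neg
  have hIB : ∫ p in S ℓ', p.1 = (∫⁻ ξ : ℝ, ENNReal.ofReal ξ * g' ξ).toReal :=
    hintS ℓ' hℓ'meas hℓ'_nonneg hℓ'_neg
  have hLHS : (∫ p in S ℓA, p.1) / (volume (S ℓA)).toReal = c := by
    rw [hIA, hvolSA, hcen, ENNReal.toReal_mul, ENNReal.toReal_ofReal hc0]
    have h3 : (∫⁻ ξ : ℝ, g ξ).toReal = (volume A).toReal := by rw [hI3g]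
    rw [h3]
    field_simp
  rw [hLHS, hIB, hvolS']
  have hpos' : 0 < (∫⁻ ξ : ℝ, g' ξ).toReal :=
    ENNReal.toReal_pos hI3'_ne0 hI3'_ne_top
  rw [le_div_iff₀ hpos']
  have h := ENNReal.toReal_mono hI1'_ne hkey'
  rwa [ENNReal.toReal_mul, ENNReal.toReal_ofReal hc0] at h
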